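/- Let D be a deterministic co-Büchi automaton with state set Q and set α. Define the FDFA F with leading automaton D (without acceptance) and, at each state q, a progress DFA of two copies of D starting at (q,0), moving permanently to copy 1 upon visiting a state of α, with accepting states Q × {0}. Then (u,v) is accepted by F if and only if u·v^ω is accepted by D, and F is saturated. -/

import Mathlib

open Classical

/-- `wpow v n` is the word `v` repeated `n` times. -/
def wpow {α : Type} (v : List α) : ℕ → List α
  | 0 => []
  | n + 1 => wpow v n ++ v

/-- The ultimately periodic infinite word `u·v^ω` (meaningful when `v ≠ []`). -/
def upWord {α : Type} [Inhabited α] (u v : List α) : ℕ → α := fun n =>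
  if n < u.length then u.getD n default
  else v.getD ((n - u.length) % v.length) default

/-- `l` is a prefix of the infinite word `w`. -/
def prefOf {α : Type} [Inhabited α] (l : List α) (w : ℕ → α) : Prop :=
  ∀ i < l.length, w i = l.getD i default

/-- A complete deterministic automaton (no acceptance condition). -/
structure DetAuto (α : Type) : Type 1 where
  State : Type
  [fin : Fintype State]
  init : State
  step : State → α → State

attribute [instance] DetAuto.fin

namespace DetAuto

variable {α : Type}

/-- The state reached from `q` after reading the finite word `w`. -/
def run (A : DetAuto α) (q : A.State) (w : List α) : A.State := w.foldl A.step q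

/-- The state reached from the initial state after reading `w`. -/
def eval (A : DetAuto α) (w : List α) : A.State := A.run A.init w

/-- The (infinite) run of `A` on an infinite word `w`. -/
def runSeq (A : DetAuto α) (w : ℕ → α) : ℕ → A.State
  | 0 => A.init
  | n + 1 => A.step (A.runSeq w n) (w n)

lemma exists_rep (A : DetAuto α) (u v : List α) :
    ∃ i, ∃ j, 1 ≤ j ∧ A.eval (u ++ wpow v i) = A.eval (u ++ wpow v (i + j)) := by
  obtain ⟨a, b, hab, hfab⟩ :=
    Finite.exists_ne_map_eq_of_infinite (fun n : ℕ => A.eval (u ++ wpow v n))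
  rcases Nat.lt_or_gt_of_ne hab with h | (h : b < a)
  · exact ⟨a, b - a, by omega, by rw [Nat.add_sub_cancel' h.le]; exact hfab⟩
  · exact ⟨b, a - b, by omega, by rw [Nat.add_sub_cancel' h.le]; exact hfab.symm⟩

/-- The least `i` in the normalization of `(u,v)` w.r.t. `A`. -/
noncomputable def normI (A : DetAuto α) (u v : List α) : ℕ :=
  Nat.find (A.exists_rep u v)

lemma normI_spec (A : DetAuto α) (u v : List α) :
    ∃ j, 1 ≤ j ∧ A.eval (u ++ wpow v (A.normI u v))
      = A.eval (u ++ wpow v (A.normI u v + j)) :=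
  Nat.find_spec (A.exists_rep u v)

/-- The least `j` in the normalization of `(u,v)` w.r.t. `A`. -/
noncomputable def normJ (A : DetAuto α) (u v : List α) : ℕ :=
  Nat.find (A.normI_spec u v)

/-- The normalization `(x, y) = (u·v^i, v^j)` of `(u,v)` w.r.t. `A`. -/
noncomputable def normalize (A : DetAuto α) (u v : List α) : List α × List α :=
  (u ++ wpow v (A.normI u v), wpow v (A.normJ u v))

/-- The product automaton. -/
def prod (A B : DetAuto α) : DetAuto α where
  State := A.State × B.State
  init := (A.init, B.init)
  step := fun p σ => (A.step p.1 σ, B.step p.2 σ)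

end DetAuto

/-- A family of DFAs: a leading automaton and a progress DFA for each of its states. -/
structure FDFA (α : Type) : Type 1 where
  leading : DetAuto α
  pState : leading.State → Type
  [pFin : ∀ q, Fintype (pState q)]
  pInit : ∀ q, pState q
  pStep : ∀ q, pState q → α → pState q
  pAcc : ∀ q, Set (pState q)

attribute [instance] FDFA.pFin

namespace FDFA

variable {α : Type}

/-- The progress DFA at state `q` accepts the finite word `y`. -/
def progAccept (F : FDFA α) (q : F.leading.State) (y : List α) : Prop :=
  y.foldl (F.pStep q) (F.pInit q) ∈ F.pAcc q

/-- `F` accepts the pair `(u, v)`: with `(x,y)` the normalization of `(u,v)` w.r.t.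
the leading automaton, the progress DFA at the state reached on `x` accepts `y`. -/
noncomputable def Accept (F : FDFA α) (u v : List α) : Prop :=
  F.progAccept (F.leading.eval (F.leading.normalize u v).1) (F.leading.normalize u v).2

/-- `F` is saturated: acceptance of `(u,v)` depends only on the infinite word `u·v^ω`. -/
def Saturated [Inhabited α] (F : FDFA α) : Prop :=
  ∀ u v u' v' : List α, v ≠ [] → v' ≠ [] → upWord u v = upWord u' v' →
    (F.Accept u v ↔ F.Accept u' v')

/-- The complement FDFA: same structure, complemented accepting states. -/
def compl (F : FDFA α) : FDFA α :=
  { F with pAcc := fun q => (F.pAcc q)ᶜ }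

end FDFA

/-- Co-Büchi acceptance: the run visits `acc` only finitely often. -/
def coBuchiAccepts {α : Type} (A : DetAuto α) (acc : Set A.State) (w : ℕ → α) : Prop :=
  {n | A.runSeq w n ∈ acc}.Finite

/-- The FDFA associated with a deterministic co-Büchi automaton: two copies of `A` per
progress DFA, moving permanently to the second copy upon visiting a state of `acc`;
accepting states are those in the first copy. -/
noncomputable def dcaToFdfa {α : Type} (A : DetAuto α) (acc : Set A.State) : FDFA α where
  leading := A
  pState := fun _ => A.State × Bool
  pInit := fun q => (q, false)
  pStep := fun _ p σ =>
    (A.step p.1 σ, if A.step p.1 σ ∈ acc then true else p.2)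
  pAcc := fun _ => {p | p.2 = false}

section Aux

variable {α : Type}

lemma wpow_length (v : List α) (m : ℕ) : (wpow v m).length = m * v.length := by
  induction m with
  | zero => simp [wpow]
  | succ n ih => simp [wpow, ih, Nat.succ_mul]

lemma wpow_add (v : List α) (m n : ℕ) : wpow v (m + n) = wpow v m ++ wpow v n := by
  induction n with
  | zero => simp [wpow]
  | succ n ih =>
    show wpow v (m + n + 1) = _
    rw [show wpow v (m + n + 1) = wpow v (m + n) ++ v from rfl, ih]
    simp [wpow]

lemma wpow_getD (v : List α) (d : α) {m t : ℕ} (ht : t < m * v.length) :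
    (wpow v m).getD t d = v.getD (t % v.length) d := by
  induction m with
  | zero => omega
  | succ n ih =>
    show (wpow v n ++ v).getD t d = _
    by_cases h : t < n * v.length
    · rw [List.getD_append _ _ _ _ (by rw [wpow_length]; exact h), ih h]
    · have hV : 0 < v.length := Nat.pos_of_ne_zero fun h0 => by simp [h0] at ht
      rw [List.getD_append_right _ _ _ _ (by rw [wpow_length]; omega), wpow_length]
      have harith : t % v.length = t - n * v.length := by
        conv_lhs => rw [show t = (t - n * v.length) + n * v.length by omega]
        have ht' : t < n * v.length + v.length := by rw [Nat.succ_mul] at ht; exact ht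
        rw [Nat.add_mul_mod_self_right, Nat.mod_eq_of_lt (by omega)]
      rw [harith]

lemma take_getD (y : List α) (d : α) {s r : ℕ} (hs : s < r) (hr : r ≤ y.length) :
    (y.take r).getD s d = y.getD s d := by
  rw [List.getD_eq_getElem _ _ (by simp; omega), List.getD_eq_getElem _ _ (by omega),
    List.getElem_take]

lemma runSeq_eq_eval (A : DetAuto α) (w : ℕ → α) (n : ℕ) :
    A.runSeq w n = A.eval (List.ofFn fun i : Fin n => w i) := by
  induction n with
  | zero => simp [DetAuto.runSeq, DetAuto.eval, DetAuto.run]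
  | succ n ih =>
    show A.step (A.runSeq w n) (w n) = _
    rw [ih, List.ofFn_succ']
    simp only [List.concat_eq_append, DetAuto.eval, DetAuto.run, List.foldl_append]
    rfl

lemma eval_append (A : DetAuto α) (x y : List α) :
    A.eval (x ++ y) = A.run (A.eval x) y := by
  simp [DetAuto.eval, DetAuto.run, List.foldl_append]

/-- Prefixes of `upWord x y`. -/
lemma ofFn_upWord [Inhabited α] (x y : List α) (hy : y ≠ []) {k r : ℕ} (hr : r ≤ y.length) :
    (List.ofFn fun i : Fin (x.length + k * y.length + r) => upWord x y i)
      = (x ++ wpow y k) ++ y.take r := by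
  have hV : 0 < y.length := List.length_pos_iff.mpr hy
  have hlen : ((x ++ wpow y k) ++ y.take r).length = x.length + k * y.length + r := by
    simp [wpow_length]; omega
  apply List.ext_getElem (by rw [List.length_ofFn, hlen])
  intro i h1 h2
  rw [List.getElem_ofFn]
  rw [← List.getD_eq_getElem (d := default) _ h2]
  simp only [Fin.cast_mk]
  rw [hlen] at h2
  unfold upWord
  by_cases hi : i < x.length
  · rw [if_pos hi, List.getD_append _ _ _ _ (by simp [wpow_length]; omega),
      List.getD_append _ _ _ _ hi]
  · rw [if_neg hi, List.append_assoc,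
      List.getD_append_right _ _ _ _ (by omega)]
    by_cases hik : i - x.length < k * y.length
    · rw [List.getD_append _ _ _ _ (by rw [wpow_length]; exact hik), wpow_getD _ _ hik]
    · rw [List.getD_append_right _ _ _ _ (by rw [wpow_length]; omega), wpow_length]
      have hs : i - x.length - k * y.length < r := by omega
      rw [take_getD _ _ hs hr]
      congr 1
      conv_lhs => rw [show i - x.length = (i - x.length - k * y.length) + k * y.length by omega]
      rw [Nat.add_mul_mod_self_right, Nat.mod_eq_of_lt (by omega)]

/-- `u·v^ω = (u·v^i)·(v^j)^ω`. -/
lemma upWord_norm [Inhabited α] (u v : List α) (hv : v ≠ []) (i j : ℕ) (hj : 1 ≤ j) :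
    upWord u v = upWord (u ++ wpow v i) (wpow v j) := by
  have hV : 0 < v.length := List.length_pos_iff.mpr hv
  funext n
  unfold upWord
  simp only [List.length_append, wpow_length]
  by_cases h1 : n < u.length
  · rw [if_pos h1, if_pos (by omega), List.getD_append _ _ _ _ h1]
  · rw [if_neg h1]
    by_cases h2 : n < u.length + i * v.length
    · rw [if_pos h2, List.getD_append_right _ _ _ _ (by omega),
        wpow_getD _ _ (by omega)]
    · rw [if_neg h2]
      have hjV : 0 < j * v.length := by positivity
      have hmod : (n - (u.length + i * v.length)) % (j * v.length) < j * v.length :=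
        Nat.mod_lt _ hjV
      rw [wpow_getD _ _ hmod, Nat.mod_mod_of_dvd _ ⟨j, by ring⟩]
      congr 1
      conv_lhs => rw [show n - u.length = (n - (u.length + i * v.length)) + i * v.length by omega]
      rw [Nat.add_mul_mod_self_right]

variable (A : DetAuto α) (acc : Set A.State)

lemma prog_fst (q : A.State) (l : List α) (p : A.State) (b : Bool) :
    (l.foldl ((dcaToFdfa A acc).pStep q) (p, b)).1 = A.run p l := by
  induction l generalizing p b with
  | nil => rfl
  | cons σ l ih =>
    show (l.foldl _ (A.step p σ, _)).1 = _
    exact ih _ _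

lemma prog_snd (q : A.State) (l : List α) (p : A.State) (b : Bool) :
    (l.foldl ((dcaToFdfa A acc).pStep q) (p, b)).2 = false ↔
      (b = false ∧ ∀ r, 1 ≤ r → r ≤ l.length → A.run p (l.take r) ∉ acc) := by
  induction l generalizing p b with
  | nil => exact ⟨fun h => ⟨h, fun r h1 h2 => absurd (Nat.le_zero.mp h2) (by omega)⟩, fun h => h.1⟩
  | cons σ l ih =>
    show (l.foldl _ (A.step p σ, if A.step p σ ∈ acc then true else b)).2 = false ↔ _
    refine (ih _ _).trans ?_
    constructor
    · rintro ⟨hc, hall⟩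
      have hb : b = false ∧ A.step p σ ∉ acc := by
        by_cases h : A.step p σ ∈ acc
        · simp [h] at hc
        · simp [h] at hc; exact ⟨hc, h⟩
      refine ⟨hb.1, fun r hr1 hr2 => ?_⟩
      match r, hr1 with
      | 1, _ => simpa [DetAuto.run] using hb.2
      | (s+2), _ =>
        have := hall (s+1) (by omega) (by simpa using hr2)
        simpa [DetAuto.run] using this
    · rintro ⟨hb, hall⟩
      have h0 : A.step p σ ∉ acc := by simpa [DetAuto.run] using hall 1 le_rfl (by simp)
      refine ⟨by simp [h0, hb], fun r hr1 hr2 => ?_⟩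
      have := hall (r+1) (by omega) (by simp; omega)
      simpa [DetAuto.run] using this

lemma eval_append_wpow (x y : List α) (hq : A.eval (x ++ y) = A.eval x) (k : ℕ) :
    A.eval (x ++ wpow y k) = A.eval x := by
  induction k with
  | zero => simp [wpow]
  | succ n ih =>
    have : x ++ wpow y (n + 1) = (x ++ wpow y n) ++ y := by simp [wpow]
    rw [this, eval_append, ih, ← eval_append, hq]

lemma runSeq_upWord [Inhabited α] (x y : List α) (hy : y ≠ [])
    (hq : A.eval (x ++ y) = A.eval x) {k r : ℕ} (hr : r ≤ y.length) :
    A.runSeq (upWord x y) (x.length + k * y.length + r)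
      = A.run (A.eval x) (y.take r) := by
  rw [runSeq_eq_eval, ofFn_upWord x y hy hr, eval_append, eval_append_wpow A x y hq]

/-- Key equivalence for a normalized pair. -/
lemma key_equiv [Inhabited α] (x y : List α) (hy : y ≠ [])
    (hq : A.eval (x ++ y) = A.eval x) :
    ((dcaToFdfa A acc).progAccept (A.eval x) y ↔ coBuchiAccepts A acc (upWord x y)) := by
  have hV : 0 < y.length := List.length_pos_iff.mpr hy
  have hAcc : (dcaToFdfa A acc).progAccept (A.eval x) y ↔
      ∀ r, 1 ≤ r → r ≤ y.length → A.run (A.eval x) (y.take r) ∉ acc := by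
    unfold FDFA.progAccept
    show (y.foldl _ (A.eval x, false)).2 = false ↔ _
    refine (prog_snd A acc _ _ _ _).trans ?_
    simp
  rw [hAcc]
  constructor
  · intro h
    apply Set.Finite.subset (Set.finite_Iic x.length)
    intro n hn
    simp only [Set.mem_setOf_eq] at hn
    by_contra hxn
    simp only [Set.mem_Iic, not_le] at hxn
    set m := n - x.length - 1 with hm
    have hn' : n = x.length + (m / y.length) * y.length + (m % y.length + 1) := by
      have := Nat.div_add_mod m y.length
      rw [Nat.mul_comm]
      omega
    rw [hn', runSeq_upWord A x y hy hq (by have := Nat.mod_lt m hV; omega)] at hn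
    exact h _ (by omega) (by have := Nat.mod_lt m hV; omega) hn
  · intro h r hr1 hr2
    intro hmem
    have : {n | A.runSeq (upWord x y) n ∈ acc}.Infinite := by
      refine Set.infinite_of_injective_forall_mem
        (f := fun k : ℕ => x.length + k * y.length + r) ?_ ?_
      · intro a b hab
        simp only at hab
        have : a * y.length = b * y.length := by omega
        exact Nat.eq_of_mul_eq_mul_right hV this
      · intro k
        simp only [Set.mem_setOf_eq]
        rw [runSeq_upWord A x y hy hq hr2]
        exact hmem
    exact this h

lemma main_equiv [Inhabited α] (u v : List α) (hv : v ≠ []) :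
    ((dcaToFdfa A acc).Accept u v ↔ coBuchiAccepts A acc (upWord u v)) := by
  have hV : 0 < v.length := List.length_pos_iff.mpr hv
  obtain ⟨hj1, hspec⟩ : 1 ≤ A.normJ u v ∧ A.eval (u ++ wpow v (A.normI u v))
      = A.eval (u ++ wpow v (A.normI u v + A.normJ u v)) :=
    Nat.find_spec (A.normI_spec u v)
  set i := A.normI u v
  set j := A.normJ u v
  set x := u ++ wpow v i with hx
  set y := wpow v j with hyy
  have hy : y ≠ [] := by
    have hlen : y.length = j * v.length := wpow_length v j
    have hpos : 0 < y.length := by rw [hlen]; exact Nat.mul_pos hj1 hV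
    exact List.length_pos_iff.mp hpos
  have hq : A.eval (x ++ y) = A.eval x := by
    rw [hx, hyy, List.append_assoc, ← wpow_add]
    exact hspec.symm
  have hlead : (dcaToFdfa A acc).leading = A := rfl
  have hup : upWord u v = upWord x y := upWord_norm u v hv i j hj1
  have : (dcaToFdfa A acc).Accept u v =
      (dcaToFdfa A acc).progAccept (A.eval x) y := rfl
  rw [this, hup]
  exact key_equiv A acc x y hy hq

end Aux

/-- The FDFA built from a deterministic co-Büchi automaton `(A, acc)`
accepts `(u,v)` iff `A` co-Büchi-accepts `u·v^ω`, and it is saturated. -/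
theorem dca_to_fdfa_correct {α : Type} [Inhabited α] (A : DetAuto α)
    (acc : Set A.State) :
    (∀ u v : List α, v ≠ [] →
      ((dcaToFdfa A acc).Accept u v ↔ coBuchiAccepts A acc (upWord u v))) ∧
    (dcaToFdfa A acc).Saturated := by
  have main := main_equiv A acc
  refine ⟨main, fun u v u' v' hv hv' hw => ?_⟩
  rw [main u v hv, main u' v' hv', hw]
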